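/- arXiv:1707.05502 — 4 statements merged into one kernel-verified Lean document; each statement's English description precedes it below -/
import Mathlib

section
/- Let N ∈ ℝ^{n×n} be nilpotent (N^n = 0) and C ∈ ℝ^{p×n}. Define the convex cones 𝒩 = {η ∈ ℝ^n : C e^{Nt} η ≤ 0 (entrywise) for all t ≥ 0} and ℳ = {η ∈ ℝ^n : C N^r η ≤ 0 for all r = 0,1,...,n−1}. Let 𝒟 be the smallest linear subspace of ℝ^n containing ℳ. Then 𝒩 ⊆ 𝒟. -/
open Matrix Polynomial Filter

/-- If a real polynomial has nonpositive leading coefficient, it is eventually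
nonpositive at infinity. -/
lemma stmt12_aux_ev_nonpos (P : ℝ[X]) (h : P.leadingCoeff ≤ 0) :
    ∀ᶠ t in atTop, P.eval t ≤ 0 := by
  rcases lt_or_ge 0 P.degree with hd | hd
  · exact (P.tendsto_atBot_of_leadingCoeff_nonpos hd h).eventually (eventually_le_atBot 0)
  · have hP := eq_C_of_degree_le_zero hd
    rw [hP] at h ⊢
    rw [leadingCoeff_C] at h
    exact Eventually.of_forall fun t => by simpa using h

/-- If a real polynomial is nonpositive on `[0, ∞)`, its leading coefficient is
nonpositive. -/
lemma stmt12_aux_lc_nonpos (P : ℝ[X]) (h : ∀ t, 0 ≤ t → P.eval t ≤ 0) :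
    P.leadingCoeff ≤ 0 := by
  by_contra hc
  push_neg at hc
  rcases lt_or_ge 0 P.degree with hd | hd
  · have ht := P.tendsto_atTop_of_leadingCoeff_nonneg hd hc.le
    obtain ⟨t, ht1, ht0⟩ := ((ht.eventually_ge_atTop 1).and (eventually_ge_atTop (0 : ℝ))).exists
    linarith [h t ht0]
  · have hP := eq_C_of_degree_le_zero hd
    rw [hP, leadingCoeff_C] at hc
    have := h 0 le_rfl
    rw [hP] at this
    simp at this
    linarith

/-- The derivative of a polynomial with nonpositive leading coefficient also has
nonpositive leading coefficient. -/
lemma stmt12_aux_lc_deriv (P : ℝ[X]) (h : P.leadingCoeff ≤ 0) :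
    (derivative P).leadingCoeff ≤ 0 := by
  rcases Nat.eq_zero_or_pos P.natDegree with h0 | hpos
  · rw [derivative_of_natDegree_zero h0]
    simp
  · have hPne : P ≠ 0 := fun hP => by simp [hP] at hpos
    have hlc : P.leadingCoeff ≠ 0 := leadingCoeff_ne_zero.mpr hPne
    have hco : (derivative P).coeff (P.natDegree - 1) =
        P.leadingCoeff * (P.natDegree : ℝ) := by
      have h1 : P.natDegree - 1 + 1 = P.natDegree := Nat.succ_pred_eq_of_pos hpos
      have h2 : ((P.natDegree - 1 : ℕ) : ℝ) + 1 = (P.natDegree : ℝ) := by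
        exact_mod_cast h1
      rw [coeff_derivative, h1, h2, leadingCoeff]
    have hne : (derivative P).coeff (P.natDegree - 1) ≠ 0 := by
      rw [hco]
      exact mul_ne_zero hlc (Nat.cast_ne_zero.mpr (by omega))
    have hdeg : (derivative P).natDegree = P.natDegree - 1 :=
      le_antisymm (natDegree_derivative_le P) (le_natDegree_of_ne_zero hne)
    rw [leadingCoeff, hdeg, hco]
    exact mul_nonpos_of_nonpos_of_nonneg h (Nat.cast_nonneg _)

/-- A sum of matrices applied to a vector. -/
lemma stmt12_aux_sum_mulVec {ι m n : Type*} [Fintype n]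
    (s : Finset ι) (M : ι → Matrix m n ℝ) (v : n → ℝ) :
    (∑ i ∈ s, M i).mulVec v = ∑ i ∈ s, (M i).mulVec v := by
  ext j
  simp only [Matrix.mulVec, dotProduct, Finset.sum_apply, Finset.sum_mul,
    Matrix.sum_apply]
  rw [Finset.sum_comm]

/-- pivotal lemma: for nilpotent `N` and `C`, the cone
`𝒩 = {η : C e^{Nt} η ≤ 0 ∀ t ≥ 0}` is contained in the smallest subspace containing
`ℳ = {η : C N^r η ≤ 0 ∀ r < n}`. -/
theorem stmt12 (n p : ℕ)
    (N : Matrix (Fin n) (Fin n) ℝ) (hN : N ^ n = 0)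
    (C : Matrix (Fin p) (Fin n) ℝ) :
    {η : Fin n → ℝ | ∀ t : ℝ, 0 ≤ t → ∀ σ : Fin p,
        C.mulVec ((NormedSpace.exp (t • N)).mulVec η) σ ≤ 0} ⊆
    (Submodule.span ℝ
      {η : Fin n → ℝ | ∀ (σ : Fin p) (r : ℕ), r ≤ n - 1 →
        C.mulVec ((N ^ r).mulVec η) σ ≤ 0} : Submodule ℝ (Fin n → ℝ)) := by
  rcases Nat.eq_zero_or_pos n with hn | hn
  · subst hn
    intro η _
    have : η = 0 := funext fun i => i.elim0
    rw [this]
    exact Submodule.zero_mem _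
  intro η hη
  -- the coefficients
  set a : Fin p → ℕ → ℝ := fun σ j => C.mulVec ((N ^ j).mulVec η) σ with ha_def
  have ha0 : ∀ σ j, n ≤ j → a σ j = 0 := by
    intro σ j hj
    have : N ^ j = 0 := pow_eq_zero_of_le hj hN
    simp [ha_def, this]
  -- exponential as a finite sum
  have hexp : ∀ t : ℝ, NormedSpace.exp (t • N)
      = ∑ r ∈ Finset.range n, (t ^ r * ((r.factorial : ℝ)⁻¹)) • N ^ r := by
    intro t
    rw [NormedSpace.exp_eq_tsum (𝕂 := ℝ)]
    show ∑' (r : ℕ), ((r.factorial : ℝ)⁻¹) • (t • N) ^ r = _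
    rw [tsum_eq_sum (s := Finset.range n) (f := fun r => ((r.factorial : ℝ)⁻¹) • (t • N) ^ r)
      (by
        intro b hb
        have hnb : n ≤ b := Nat.le_of_not_lt fun h => hb (Finset.mem_range.mpr h)
        have hNb : N ^ b = 0 := pow_eq_zero_of_le hnb hN
        show ((b.factorial : ℝ)⁻¹) • (t • N) ^ b = 0
        rw [_root_.smul_pow, hNb, smul_zero, smul_zero])]
    refine Finset.sum_congr rfl fun r _ => ?_
    rw [_root_.smul_pow, smul_smul, mul_comm]
  -- the polynomials
  set P : Fin p → ℕ → ℝ[X] := fun σ k =>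
    ∑ r ∈ Finset.range n, Polynomial.C (((r.factorial : ℝ)⁻¹) * a σ (k + r)) * X ^ r
    with hP_def
  -- evaluation of the polynomials
  have heval : ∀ (σ : Fin p) (k : ℕ) (t : ℝ), (P σ k).eval t
      = C.mulVec ((N ^ k).mulVec ((NormedSpace.exp (t • N)).mulVec η)) σ := by
    intro σ k t
    rw [hexp t, Matrix.mulVec_mulVec, Matrix.mulVec_mulVec]
    have hmats : C * N ^ k * ∑ r ∈ Finset.range n, (t ^ r * ((r.factorial : ℝ)⁻¹)) • N ^ r
        = ∑ r ∈ Finset.range n, (t ^ r * ((r.factorial : ℝ)⁻¹)) • (C * N ^ (k + r)) := by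
      rw [Matrix.mul_sum]
      refine Finset.sum_congr rfl fun r _ => ?_
      rw [Matrix.mul_smul, Matrix.mul_assoc, ← pow_add]
    rw [hmats, stmt12_aux_sum_mulVec]
    rw [hP_def]
    simp only [eval_finset_sum, eval_mul, eval_C, eval_pow, eval_X, Finset.sum_apply]
    refine Finset.sum_congr rfl fun r _ => ?_
    rw [Matrix.smul_mulVec, Pi.smul_apply, smul_eq_mul]
    have : (C * N ^ (k + r)).mulVec η = C.mulVec ((N ^ (k + r)).mulVec η) := by
      rw [Matrix.mulVec_mulVec]
    rw [this, ha_def]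
    ring
  -- derivative relation
  obtain ⟨m, rfl⟩ : ∃ m, n = m + 1 := ⟨n - 1, (Nat.succ_pred_eq_of_pos hn).symm⟩
  have hder : ∀ (σ : Fin p) (k : ℕ), derivative (P σ k) = P σ (k + 1) := by
    intro σ k
    rw [hP_def]
    rw [derivative_sum]
    simp only [derivative_C_mul_X_pow]
    rw [Finset.sum_range_succ' (fun r => Polynomial.C ((((r : ℕ).factorial : ℝ)⁻¹ * a σ (k + r)) * (r : ℝ)) * X ^ (r - 1))]
    rw [Finset.sum_range_succ (fun r => Polynomial.C (((r.factorial : ℝ)⁻¹) * a σ (k + 1 + r)) * X ^ r)]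
    have htop : a σ (k + 1 + m) = 0 := by
      rcases Nat.eq_zero_or_pos k with rfl | _
      · rcases Nat.lt_or_ge (0 + 1 + m) (m + 1) with h | h
        · omega
        · exact ha0 σ _ h
      · exact ha0 σ _ (by omega)
    rw [htop]
    simp only [mul_zero, map_zero, zero_mul, add_zero, Nat.cast_zero, Nat.factorial_zero]
    refine Finset.sum_congr rfl fun i _ => ?_
    have hfac : ((i + 1).factorial : ℝ)⁻¹ * (a σ (k + (i + 1))) * ((i : ℝ) + 1)
        = ((i.factorial : ℝ)⁻¹) * a σ (k + 1 + i) := by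
      have h1 : ((i + 1).factorial : ℝ) = ((i : ℝ) + 1) * (i.factorial : ℝ) := by
        rw [Nat.factorial_succ]
        push_cast
        ring
      have h2 : k + (i + 1) = k + 1 + i := by omega
      rw [h1, h2, mul_inv]
      have hip : ((i : ℝ) + 1) ≠ 0 := by positivity
      field_simp
    rw [show ((i : ℕ) + 1 : ℕ) - 1 = i from rfl]
    congr 1
    rw [← hfac]
    congr 1
    push_cast
    ring
  -- leading coefficients are nonpositive
  have hb : ∀ (σ : Fin p) (k : ℕ), (P σ k).leadingCoeff ≤ 0 := by
    intro σ k
    induction k with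
    | zero =>
      apply stmt12_aux_lc_nonpos
      intro t ht
      rw [heval σ 0 t]
      rw [pow_zero, Matrix.one_mulVec]
      exact hη t ht σ
    | succ k ih =>
      rw [← hder σ k]
      exact stmt12_aux_lc_deriv _ ih
  -- eventually all evaluations are nonpositive
  have hev : ∀ᶠ t in atTop, ∀ x : Fin p × Fin (m + 1), (P x.1 x.2.1).eval t ≤ 0 :=
    eventually_all.mpr fun x => stmt12_aux_ev_nonpos _ (hb x.1 x.2.1)
  obtain ⟨T, hT⟩ := eventually_atTop.mp hev
  -- the sampling points
  set ts : Fin (m + 1) → ℝ := fun i => T + (i : ℕ) with hts_def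
  have hts_inj : Function.Injective ts := by
    intro i j hij
    have : ((i : ℕ) : ℝ) = ((j : ℕ) : ℝ) := by
      simpa [hts_def] using hij
    exact Fin.ext (Nat.cast_injective this)
  have hts_ge : ∀ i, T ≤ ts i := fun i => by
    simp [hts_def]
  -- the sampled vectors lie in ℳ
  set v : Fin (m + 1) → (Fin (m + 1) → ℝ) :=
    fun i => (NormedSpace.exp (ts i • N)).mulVec η with hv_def
  have hvM : ∀ i, v i ∈ {η : Fin (m + 1) → ℝ | ∀ (σ : Fin p) (r : ℕ), r ≤ m + 1 - 1 →
      C.mulVec ((N ^ r).mulVec η) σ ≤ 0} := by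
    intro i σ r hr
    have hrlt : r < m + 1 := by omega
    have := hT (ts i) (hts_ge i) (σ, ⟨r, hrlt⟩)
    rw [heval σ r (ts i)] at this
    exact this
  -- Vandermonde inversion
  set V : Matrix (Fin (m + 1)) (Fin (m + 1)) ℝ := Matrix.vandermonde ts with hV_def
  have hdet : V.det ≠ 0 := Matrix.det_vandermonde_ne_zero_iff.mpr hts_inj
  have hVinv : V⁻¹ * V = 1 := Matrix.nonsing_inv_mul V (isUnit_iff_ne_zero.mpr hdet)
  set w : Fin (m + 1) → (Fin (m + 1) → ℝ) :=
    fun r => ((r : ℕ).factorial : ℝ)⁻¹ • (N ^ (r : ℕ)).mulVec η with hw_def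
  have hvw : ∀ i, v i = ∑ r : Fin (m + 1), V i r • w r := by
    intro i
    rw [hv_def]
    simp only
    rw [hexp (ts i), stmt12_aux_sum_mulVec]
    rw [← Fin.sum_univ_eq_sum_range
      (fun r => ((ts i ^ r * ((r.factorial : ℝ)⁻¹)) • N ^ r).mulVec η) (m + 1)]
    refine Finset.sum_congr rfl fun r _ => ?_
    rw [Matrix.smul_mulVec, hV_def, hw_def]
    simp only [Matrix.vandermonde_apply]
    rw [smul_smul]
  -- reconstruct η
  have hkey : η = ∑ i : Fin (m + 1), V⁻¹ 0 i • v i := by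
    symm
    calc ∑ i : Fin (m + 1), V⁻¹ 0 i • v i
        = ∑ i : Fin (m + 1), ∑ r : Fin (m + 1), (V⁻¹ 0 i * V i r) • w r := by
          refine Finset.sum_congr rfl fun i _ => ?_
          rw [hvw i, Finset.smul_sum]
          exact Finset.sum_congr rfl fun r _ => (mul_smul (V⁻¹ 0 i) (V i r) (w r)).symm
      _ = ∑ r : Fin (m + 1), (∑ i : Fin (m + 1), V⁻¹ 0 i * V i r) • w r := by
          rw [Finset.sum_comm]
          exact Finset.sum_congr rfl fun r _ => (Finset.sum_smul).symm
      _ = ∑ r : Fin (m + 1), (V⁻¹ * V) 0 r • w r := by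
          refine Finset.sum_congr rfl fun r _ => ?_
          rw [Matrix.mul_apply]
      _ = w 0 := by
          rw [hVinv]
          simp [Matrix.one_apply]
      _ = η := by
          simp [hw_def, Matrix.one_mulVec]
  rw [hkey]
  exact Submodule.sum_mem _ fun i _ =>
    Submodule.smul_mem _ _ (Submodule.subset_span (hvM i))
end

section
/- Let N ∈ ℝ^{n×n} satisfy N^n = 0 and let C ∈ ℝ^{p×n} with rows C_1,...,C_p. Let ℳ = {η : C_σ N^r η ≤ 0 for all σ and all 0 ≤ r ≤ n−1}, let 𝒫⁻ = {(σ,r) : there exists η ∈ ℳ with C_σ N^r η < 0}, and 𝒫₀ its complement in {1,...,p}×{0,...,n−1}. Then the set ℳ₀ = {η : C_σ N^r η ≤ 0 for all (σ,r) ∈ 𝒫₀} equals the subspace 𝒟₀ = {η : C_σ N^r η = 0 for all (σ,r) ∈ 𝒫₀}, and this subspace is the smallest subspace containing ℳ. -/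
open Matrix

/-- with `ℳ = {η : C_σ N^r η ≤ 0 ∀(σ,r)}`,
`𝒫⁻ = {(σ,r) : ∃ η ∈ ℳ, C_σ N^r η < 0}` and `𝒫₀` its complement, the set
`ℳ₀` of vectors satisfying the inequalities indexed by `𝒫₀` equals the subspace `𝒟₀`
where these hold with equality, and `𝒟₀` is the smallest subspace containing `ℳ`
(i.e. it is the span of `ℳ`). -/
theorem stmt13 (n p : ℕ)
    (N : Matrix (Fin n) (Fin n) ℝ) (hN : N ^ n = 0)
    (C : Matrix (Fin p) (Fin n) ℝ)
    (M : Set (Fin n → ℝ))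
    (hM : M = {η | ∀ (σ : Fin p) (r : ℕ), r ≤ n - 1 → C.mulVec ((N ^ r).mulVec η) σ ≤ 0})
    (P0 : Set (Fin p × ℕ))
    (hP0 : P0 = {sr | sr.2 ≤ n - 1 ∧
      ¬ ∃ η ∈ M, C.mulVec ((N ^ sr.2).mulVec η) sr.1 < 0}) :
    ({η | ∀ sr ∈ P0, C.mulVec ((N ^ sr.2).mulVec η) sr.1 ≤ 0} =
      {η | ∀ sr ∈ P0, C.mulVec ((N ^ sr.2).mulVec η) sr.1 = 0}) ∧
    ((Submodule.span ℝ M : Set (Fin n → ℝ)) =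
      {η | ∀ sr ∈ P0, C.mulVec ((N ^ sr.2).mulVec η) sr.1 = 0}) := by
  classical
  set L : Fin p → ℕ → (Fin n → ℝ) →ₗ[ℝ] ℝ :=
    fun σ r => (LinearMap.proj σ) ∘ₗ (C * N ^ r).mulVecLin with hLdef
  have hLe : ∀ (σ : Fin p) (r : ℕ) (η : Fin n → ℝ),
      C.mulVec ((N ^ r).mulVec η) σ = L σ r η := by
    intro σ r η
    simp [hLdef, Matrix.mulVecLin_apply, ← Matrix.mulVec_mulVec]
  have hMdef : ∀ η, η ∈ M ↔ ∀ sr : Fin p × ℕ, sr.2 ≤ n - 1 → L sr.1 sr.2 η ≤ 0 := by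
    intro η
    rw [hM]
    constructor
    · rintro h ⟨σ, r⟩ hr
      rw [← hLe]; exact h σ r hr
    · intro h σ r hr
      rw [hLe]; exact h (σ, r) hr
  have hP0' : ∀ sr : Fin p × ℕ, sr ∈ P0 ↔ sr.2 ≤ n - 1 ∧ ∀ η ∈ M, L sr.1 sr.2 η = 0 := by
    intro sr
    rw [hP0]
    simp only [Set.mem_setOf_eq, not_exists, not_and, not_lt]
    constructor
    · rintro ⟨h1, h2⟩
      refine ⟨h1, fun η hη => le_antisymm ((hMdef η).1 hη sr h1) ?_⟩
      have := h2 η hη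
      rwa [hLe] at this
    · rintro ⟨h1, h2⟩
      refine ⟨h1, fun η hη => ?_⟩
      rw [hLe, h2 η hη]
  set Pneg : Set (Fin p × ℕ) :=
    {sr | sr.2 ≤ n - 1 ∧ ∃ η ∈ M, L sr.1 sr.2 η < 0} with hPnegdef
  have hfin : Pneg.Finite := by
    apply Set.Finite.subset
      ((Set.finite_univ : (Set.univ : Set (Fin p)).Finite).prod (Set.finite_Iic (n - 1)))
    rintro ⟨σ, r⟩ ⟨h1, _⟩
    exact Set.mem_prod.mpr ⟨Set.mem_univ _, h1⟩
  have hch : ∀ sr : Fin p × ℕ, ∃ η : Fin n → ℝ, sr ∈ Pneg → η ∈ M ∧ L sr.1 sr.2 η < 0 := by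
    intro sr
    by_cases h : sr ∈ Pneg
    · obtain ⟨η, hη, hlt⟩ := h.2
      exact ⟨η, fun _ => ⟨hη, hlt⟩⟩
    · exact ⟨0, fun h' => absurd h' h⟩
  choose w hw using hch
  set ηstar : Fin n → ℝ := ∑ sr ∈ hfin.toFinset, w sr with hηstar
  have hwM : ∀ sr ∈ hfin.toFinset, w sr ∈ M := fun sr h => (hw sr (hfin.mem_toFinset.mp h)).1
  have hstarM : ηstar ∈ M := by
    rw [hMdef]
    intro sr hr
    rw [hηstar, map_sum]
    exact Finset.sum_nonpos fun x hx => (hMdef _).1 (hwM x hx) sr hr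
  have hstarneg : ∀ sr ∈ Pneg, L sr.1 sr.2 ηstar < 0 := by
    intro sr hsr
    have hmem : sr ∈ hfin.toFinset := hfin.mem_toFinset.mpr hsr
    rw [hηstar, map_sum, ← Finset.add_sum_erase _ _ hmem]
    have h1 : L sr.1 sr.2 (w sr) < 0 := (hw sr hsr).2
    have h2 : ∑ x ∈ hfin.toFinset.erase sr, L sr.1 sr.2 (w x) ≤ 0 :=
      Finset.sum_nonpos fun x hx =>
        (hMdef _).1 (hwM x (Finset.mem_of_mem_erase hx)) sr hsr.1
    linarith
  have key : ∀ η : Fin n → ℝ, (∀ sr ∈ P0, L sr.1 sr.2 η ≤ 0) →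
      ∃ t : ℝ, 0 ≤ t ∧ η + t • ηstar ∈ M := by
    intro η hη
    obtain ⟨t, ht⟩ : ∃ t : ℝ,
        t = ∑ sr ∈ hfin.toFinset, max 0 (L sr.1 sr.2 η / (- L sr.1 sr.2 ηstar)) := ⟨_, rfl⟩
    refine ⟨t, ?_, ?_⟩
    · rw [ht]; exact Finset.sum_nonneg fun x _ => le_max_left _ _
    rw [hMdef]
    intro sr hr
    rw [map_add, _root_.map_smul, smul_eq_mul]
    by_cases hp : sr ∈ P0
    · have h1 := hη sr hp
      have h2 : L sr.1 sr.2 ηstar = 0 := ((hP0' sr).1 hp).2 ηstar hstarM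
      rw [h2, mul_zero]
      linarith
    · have hsr : sr ∈ Pneg := by
        rw [hP0] at hp
        simp only [Set.mem_setOf_eq, not_and, not_not] at hp
        obtain ⟨η', hη', hlt⟩ := hp hr
        rw [hLe] at hlt
        exact ⟨hr, η', hη', hlt⟩
      have hd : 0 < - L sr.1 sr.2 ηstar := by linarith [hstarneg sr hsr]
      have hle : L sr.1 sr.2 η / (- L sr.1 sr.2 ηstar) ≤ t := by
        rw [ht]
        exact le_trans (le_max_right 0 _)
          (Finset.single_le_sum
            (f := fun x : Fin p × ℕ => max (0:ℝ) (L x.1 x.2 η / (- L x.1 x.2 ηstar)))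
            (fun x _ => le_max_left _ _) (hfin.mem_toFinset.mpr hsr))
      have h3 : L sr.1 sr.2 η ≤ t * (- L sr.1 sr.2 ηstar) := (div_le_iff₀ hd).mp hle
      nlinarith
  constructor
  · ext η
    simp only [Set.mem_setOf_eq]
    constructor
    · intro hη sr hsr
      have hη' : ∀ sr ∈ P0, L sr.1 sr.2 η ≤ 0 := by
        intro sr h
        rw [← hLe]; exact hη sr h
      obtain ⟨t, ht0, htM⟩ := key η hη'
      have h1 : L sr.1 sr.2 (η + t • ηstar) = 0 := ((hP0' sr).1 hsr).2 _ htM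
      have h2 : L sr.1 sr.2 ηstar = 0 := ((hP0' sr).1 hsr).2 ηstar hstarM
      rw [map_add, _root_.map_smul, smul_eq_mul, h2, mul_zero, add_zero] at h1
      rw [hLe]; exact h1
    · intro hη sr hsr
      exact le_of_eq (hη sr hsr)
  · apply Set.Subset.antisymm
    · intro η hη sr hsr
      have hsub : Submodule.span ℝ M ≤ LinearMap.ker (L sr.1 sr.2) := by
        rw [Submodule.span_le]
        intro x hx
        exact LinearMap.mem_ker.mpr (((hP0' sr).1 hsr).2 x hx)
      rw [hLe]
      exact hsub hη
    · intro η hη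
      have hη' : ∀ sr ∈ P0, L sr.1 sr.2 η ≤ 0 := by
        intro sr h
        rw [← hLe]; exact le_of_eq (hη sr h)
      obtain ⟨t, ht0, htM⟩ := key η hη'
      have heq : η = (η + t • ηstar) + (-t) • ηstar := by module
      rw [heq]
      exact Submodule.add_mem _ (Submodule.subset_span htM)
        (Submodule.smul_mem _ _ (Submodule.subset_span hstarM))
end

section
/- Let C ∈ ℝ^{p×n}, N ∈ ℝ^{n×n} with N^n = 0, and suppose η ∈ ℝ^n satisfies C(I + Nt + N²t²/2 + ⋯ + N^{n−1}t^{n−1}/(n−1)!)η ≤ 0 entrywise for all t ≥ 0. For each row index σ let r_σ be the smallest index such that C_σ N^r η = 0 for all r ≥ r_σ. Then C_σ N^{r_σ−1} η < 0 whenever r_σ ≥ 1, and consequently C_σ N^r η ≤ 0 for all r ≥ max{0, r_σ − 1}. -/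
open Matrix

/-- Auxiliary analytic lemma: if the polynomial `t ↦ ∑_{r ≤ k} t^r/r! * a r` is
nonpositive for all `t ≥ 0`, then its leading coefficient satisfies `a k ≤ 0`. -/
lemma aux_poly_nonpos (k : ℕ) (a : ℕ → ℝ)
    (h : ∀ t : ℝ, 0 ≤ t → (∑ r ∈ Finset.range (k + 1), t ^ r / r.factorial * a r) ≤ 0) :
    a k ≤ 0 := by
  set g : ℝ → ℝ := fun x => ∑ r ∈ Finset.range (k + 1), a r / r.factorial * x ^ (k - r) with hg
  have hcont : Continuous g := by
    apply continuous_finset_sum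
    intro r _
    exact (continuous_const.mul (continuous_pow _))
  have hg0 : g 0 = a k / k.factorial := by
    rw [hg]
    simp only
    rw [Finset.sum_eq_single k]
    · simp
    · intro r hr hrk
      have : 0 < k - r := by
        have := Finset.mem_range.mp hr
        omega
      rw [zero_pow (by omega), mul_zero]
    · intro h; exact absurd (Finset.self_mem_range_succ k) h
  have htend : Filter.Tendsto (fun t : ℝ => g t⁻¹) Filter.atTop (nhds (a k / k.factorial)) := by
    rw [← hg0]
    exact (hcont.tendsto 0).comp tendsto_inv_atTop_zero
  have hle : a k / k.factorial ≤ 0 := by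
    apply le_of_tendsto htend
    filter_upwards [Filter.eventually_ge_atTop (1 : ℝ)] with t ht
    have ht0 : (0 : ℝ) < t := lt_of_lt_of_le one_pos ht
    have htk : (0 : ℝ) < t ^ k := pow_pos ht0 k
    have heq : g t⁻¹ = (∑ r ∈ Finset.range (k + 1), t ^ r / r.factorial * a r) / t ^ k := by
      rw [hg, Finset.sum_div]
      apply Finset.sum_congr rfl
      intro r hr
      have hrk : r ≤ k := by have := Finset.mem_range.mp hr; omega
      have : (t⁻¹) ^ (k - r) = t ^ r / t ^ k := by
        rw [inv_pow]
        field_simp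
        rw [← pow_add]
        congr 1
        omega
      rw [this]
      field_simp
    rw [heq]
    exact div_nonpos_of_nonpos_of_nonneg (h t (le_of_lt ht0)) (le_of_lt htk)
  have hfac : (0 : ℝ) < k.factorial := by positivity
  by_contra hpos
  push_neg at hpos
  have : 0 < a k / k.factorial := div_pos hpos hfac
  linarith

/-- if every entry of `C(Σ_{r<n} N^r t^r/r!)η` is nonpositive for all
`t ≥ 0`, and `r_σ` is the smallest index with `C_σ N^r η = 0` for all `r ≥ r_σ`, then
`C_σ N^{r_σ−1} η < 0` whenever `r_σ ≥ 1`, and `C_σ N^r η ≤ 0` for all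
`r ≥ max{0, r_σ − 1}`. -/
theorem stmt15 (n p : ℕ)
    (N : Matrix (Fin n) (Fin n) ℝ) (hN : N ^ n = 0)
    (C : Matrix (Fin p) (Fin n) ℝ)
    (η : Fin n → ℝ)
    (hη : ∀ t : ℝ, 0 ≤ t → ∀ σ : Fin p,
      C.mulVec ((∑ r ∈ Finset.range n, (t ^ r / r.factorial) • N ^ r).mulVec η) σ ≤ 0)
    (rσ : Fin p → ℕ)
    (hr1 : ∀ σ, ∀ r, rσ σ ≤ r → C.mulVec ((N ^ r).mulVec η) σ = 0)
    (hr2 : ∀ σ, 1 ≤ rσ σ → C.mulVec ((N ^ (rσ σ - 1)).mulVec η) σ ≠ 0) :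
    (∀ σ, 1 ≤ rσ σ → C.mulVec ((N ^ (rσ σ - 1)).mulVec η) σ < 0) ∧
    (∀ σ (r : ℕ), rσ σ - 1 ≤ r → C.mulVec ((N ^ r).mulVec η) σ ≤ 0) := by
  -- abbreviation for the coefficients
  set a : Fin p → ℕ → ℝ := fun σ r => C.mulVec ((N ^ r).mulVec η) σ with ha
  -- linearity computation
  have key : ∀ t : ℝ, ∀ σ : Fin p,
      C.mulVec ((∑ r ∈ Finset.range n, (t ^ r / r.factorial) • N ^ r).mulVec η) σ
        = ∑ r ∈ Finset.range n, t ^ r / r.factorial * a σ r := by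
    intro t σ
    have h1 : (∑ r ∈ Finset.range n, (t ^ r / (r.factorial : ℝ)) • N ^ r).mulVec η
        = ∑ r ∈ Finset.range n, (t ^ r / (r.factorial : ℝ)) • ((N ^ r).mulVec η) := by
      have hms := map_sum (Matrix.mulVec.addMonoidHomLeft (m := Fin n) η)
        (fun r => (t ^ r / (r.factorial : ℝ)) • N ^ r) (Finset.range n)
      refine hms.trans (Finset.sum_congr rfl fun r _ => ?_)
      ext i
      simp [Matrix.smul_mulVec]
    rw [h1]
    have h2 : C.mulVec (∑ r ∈ Finset.range n, (t ^ r / (r.factorial : ℝ)) • ((N ^ r).mulVec η))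
        = ∑ r ∈ Finset.range n, (t ^ r / (r.factorial : ℝ)) • C.mulVec ((N ^ r).mulVec η) := by
      rw [← Matrix.mulVecLin_apply, map_sum]
      apply Finset.sum_congr rfl
      intro r _
      rw [_root_.map_smul, Matrix.mulVecLin_apply]
    rw [h2, Finset.sum_apply]
    apply Finset.sum_congr rfl
    intro r _
    simp [ha]
  -- first claim
  have main : ∀ σ, 1 ≤ rσ σ → a σ (rσ σ - 1) < 0 := by
    intro σ hσ
    set k := rσ σ - 1 with hk
    -- k < n
    have hkn : k < n := by
      by_contra hge
      push_neg at hge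
      apply hr2 σ hσ
      have : N ^ k = 0 := by
        calc N ^ k = N ^ n * N ^ (k - n) := by rw [← pow_add]; congr 1; omega
        _ = 0 := by rw [hN, zero_mul]
      rw [hk] at this
      simp [this]
    have hsum : ∀ t : ℝ, 0 ≤ t →
        (∑ r ∈ Finset.range (k + 1), t ^ r / r.factorial * a σ r) ≤ 0 := by
      intro t ht
      have := hη t ht σ
      rw [key t σ] at this
      have heq : (∑ r ∈ Finset.range n, t ^ r / r.factorial * a σ r)
          = ∑ r ∈ Finset.range (k + 1), t ^ r / r.factorial * a σ r := by
        symm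
        apply Finset.sum_subset
        · intro x hx
          rw [Finset.mem_range] at *
          omega
        · intro x hx hxk
          rw [Finset.mem_range] at *
          have hx2 : rσ σ ≤ x := by omega
          have hz : a σ x = 0 := hr1 σ x hx2
          rw [hz, mul_zero]
      rw [heq] at this
      exact this
    have hle := aux_poly_nonpos k (a σ) hsum
    exact lt_of_le_of_ne hle (hr2 σ hσ)
  constructor
  · exact main
  · intro σ r hr
    by_cases hσ : 1 ≤ rσ σ
    · by_cases hrr : rσ σ ≤ r
      · exact le_of_eq (hr1 σ r hrr)
      · have : r = rσ σ - 1 := by omega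
        rw [this]
        exact le_of_lt (main σ hσ)
    · have : rσ σ ≤ r := by omega
      exact le_of_eq (hr1 σ r this)
end

section
/- Let A_κ ∈ ℂ^{d×d} have a single distinct eigenvalue μ with Im μ ≠ 0, let b ∈ ℂ^{1×d} be a row vector and f ∈ ℂ^d. If Re(b e^{A_κ* t} f) ≤ 0 for all t ≥ τ (some τ ≥ 0), then b e^{A_κ* t} f = 0 for all t. -/
open Matrix Polynomial
open scoped Topology

open Filter NormedSpace Topology in
private lemma stmt18_inv_coe_tendsto : Tendsto (fun t : ℝ => ((t:ℂ))⁻¹) atTop (𝓝 0) := by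
  have h := (Complex.continuous_ofReal.tendsto 0).comp tendsto_inv_atTop_zero
  exact h.congr fun t => Complex.ofReal_inv t

open Filter NormedSpace Topology in
private lemma stmt18_poly_tendsto (Q : Polynomial ℂ) :
    Tendsto (fun t : ℝ => Q.eval (t:ℂ) / (t:ℂ) ^ Q.natDegree) atTop (𝓝 Q.leadingCoeff) := by
  set n := Q.natDegree with hn
  have key : Tendsto (fun t : ℝ => ∑ i ∈ Finset.range (n+1), Q.coeff i * ((t:ℂ)⁻¹) ^ (n - i))
      atTop (𝓝 (∑ i ∈ Finset.range (n+1), Q.coeff i * (0:ℂ) ^ (n - i))) :=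
    tendsto_finset_sum _ fun i _ => (stmt18_inv_coe_tendsto.pow _).const_mul _
  have hval : (∑ i ∈ Finset.range (n+1), Q.coeff i * (0:ℂ) ^ (n - i)) = Q.leadingCoeff := by
    rw [Finset.sum_eq_single n]
    · simp only [Nat.sub_self, pow_zero, mul_one]; rfl
    · intro i hi hine
      rw [Finset.mem_range] at hi
      have : n - i ≠ 0 := by omega
      simp [zero_pow this]
    · simp
  rw [hval] at key
  refine key.congr' ?_
  filter_upwards [eventually_ge_atTop (1:ℝ)] with t ht
  have ht0 : (t:ℂ) ≠ 0 := by
    simpa using (by linarith : t ≠ 0)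
  rw [Polynomial.eval_eq_sum_range, Finset.sum_div]
  refine Finset.sum_congr rfl fun i hi => ?_
  rw [Finset.mem_range, Nat.lt_succ_iff] at hi
  rw [inv_pow, mul_div_assoc]
  congr 1
  rw [pow_sub₀ _ ht0 hi, mul_inv, inv_inv, mul_comm, ← div_eq_mul_inv]

open NormedSpace in
private lemma stmt18_exp_scalar (c : ℂ) (d : ℕ) :
    NormedSpace.exp (c • (1 : Matrix (Fin d) (Fin d) ℂ))
      = Complex.exp c • (1 : Matrix (Fin d) (Fin d) ℂ) := by
  rw [exp_eq_tsum (𝕂 := ℂ)]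
  have h : ∀ n : ℕ, ((n.factorial:ℂ))⁻¹ • (c • (1 : Matrix (Fin d) (Fin d) ℂ)) ^ n
      = ((n.factorial:ℂ)⁻¹ • c ^ n) • (1 : Matrix (Fin d) (Fin d) ℂ) := by
    intro n; rw [_root_.smul_pow, one_pow, smul_smul, smul_eq_mul]
  show (∑' n : ℕ, ((n.factorial:ℂ))⁻¹ • (c • (1 : Matrix (Fin d) (Fin d) ℂ)) ^ n) = _
  rw [tsum_congr h, (expSeries_summable' c).tsum_smul_const,
    ← congrFun (exp_eq_tsum (𝕂 := ℂ)) c, ← Complex.exp_eq_exp_ℂ]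

open NormedSpace in
private lemma stmt18_exp_full (d : ℕ) (M : Matrix (Fin d) (Fin d) ℂ) (μ : ℂ)
    (hN : (M - μ • 1) ^ d = 0) (s : ℂ) :
    NormedSpace.exp (s • M) = Complex.exp (s * μ) •
      ∑ k ∈ Finset.range d, (s ^ k * ((k.factorial : ℂ))⁻¹) • (M - μ • 1) ^ k := by
  set N := M - μ • 1 with hNdef
  have hsplit : s • M = (s * μ) • (1 : Matrix (Fin d) (Fin d) ℂ) + s • N := by
    rw [hNdef, smul_sub, smul_smul]; abel
  have hcomm : Commute ((s * μ) • (1 : Matrix (Fin d) (Fin d) ℂ)) (s • N) :=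
    ((Commute.one_left (s • N)).smul_left _)
  rw [hsplit, Matrix.exp_add_of_commute _ _ hcomm, stmt18_exp_scalar]
  have hnil : NormedSpace.exp (s • N)
      = ∑ k ∈ Finset.range d, (s ^ k * ((k.factorial : ℂ))⁻¹) • N ^ k := by
    rw [exp_eq_tsum (𝕂 := ℂ)]
    show (∑' n : ℕ, ((n.factorial:ℂ))⁻¹ • (s • N) ^ n) = _
    rw [tsum_eq_sum (s := Finset.range d) ?_]
    · exact Finset.sum_congr rfl fun k _ => by
        rw [_root_.smul_pow, smul_smul, mul_comm]
    · intro n hn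
      have hdn : d ≤ n := le_of_not_gt (by simpa using hn)
      rw [_root_.smul_pow, pow_eq_zero_of_le hdn hN, smul_zero, smul_zero]
  rw [hnil, smul_mul_assoc, one_mul]

private lemma stmt18_sum_mulVec {d : ℕ} (g : ℕ → Matrix (Fin d) (Fin d) ℂ) (s : Finset ℕ)
    (f : Fin d → ℂ) : (∑ k ∈ s, g k).mulVec f = ∑ k ∈ s, (g k).mulVec f := by
  ext i
  simp only [Matrix.mulVec, dotProduct, Matrix.sum_apply, Finset.sum_apply, Finset.sum_mul]
  exact Finset.sum_comm

private lemma stmt18_dot_sum {d : ℕ} (b : Fin d → ℂ) (s : Finset ℕ) (v : ℕ → Fin d → ℂ) :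
    b ⬝ᵥ (∑ k ∈ s, v k) = ∑ k ∈ s, b ⬝ᵥ v k := by
  simp only [dotProduct, Finset.sum_apply, Finset.mul_sum]
  exact Finset.sum_comm

private lemma stmt18_per (θ ω : ℝ) (hω : ω ≠ 0) (k : ℕ) :
    Complex.exp ((((θ/ω + k * (2*Real.pi/|ω|)) * ω : ℝ) : ℂ) * Complex.I)
      = Complex.exp ((θ:ℂ) * Complex.I) := by
  obtain ⟨m, hm⟩ : ∃ m : ℤ, (θ/ω + k * (2*Real.pi/|ω|)) * ω = θ + m * (2*Real.pi) := by
    rcases hω.lt_or_gt with hneg | hpos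
    · refine ⟨-k, ?_⟩
      rw [abs_of_neg hneg]
      push_cast
      field_simp
    · refine ⟨k, ?_⟩
      rw [abs_of_pos hpos]
      push_cast
      field_simp
  rw [hm]
  push_cast
  rw [add_mul, Complex.exp_add, mul_assoc, Complex.exp_int_mul_two_pi_mul_I, mul_one]

/-- if `A_κ*` has the single distinct eigenvalue `μ` with `Im μ ≠ 0` and
`Re(b e^{A_κ* t} f) ≤ 0` for all `t ≥ τ`, then `b e^{A_κ* t} f = 0` for all `t`. -/
theorem stmt18 (d : ℕ) (Aκ : Matrix (Fin d) (Fin d) ℂ) (μ : ℂ)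
    (hμ : μ.im ≠ 0)
    (hchar : (Aκᴴ).charpoly = (X - C μ) ^ d)
    (b : Fin d → ℂ) (f : Fin d → ℂ) (τ : ℝ) (hτ : 0 ≤ τ)
    (hle : ∀ t : ℝ, τ ≤ t →
      (∑ i, b i * (NormedSpace.exp ((t : ℂ) • Aκᴴ)).mulVec f i).re ≤ 0) :
    ∀ t : ℝ, ∑ i, b i * (NormedSpace.exp ((t : ℂ) • Aκᴴ)).mulVec f i = 0 := by
  rcases Nat.eq_zero_or_pos d with hd | hd
  · subst hd; intro t; simp
  set M := Aκᴴ with hM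
  have hN : (M - μ • 1) ^ d = 0 := by
    have h := Matrix.aeval_self_charpoly M
    rw [hchar, map_pow, map_sub, aeval_X, aeval_C, Algebra.algebraMap_eq_smul_one] at h
    exact h
  set N := M - μ • 1 with hNdef
  set Q : Polynomial ℂ :=
    ∑ k ∈ Finset.range d,
      Polynomial.C (((k.factorial : ℂ))⁻¹ * (b ⬝ᵥ (N ^ k).mulVec f)) * X ^ k with hQdef
  have hg : ∀ s : ℝ, (∑ i, b i * (NormedSpace.exp ((s:ℂ) • M)).mulVec f i)
      = Complex.exp ((s:ℂ) * μ) * Q.eval (s:ℂ) := by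
    intro s
    have hdot : (∑ i, b i * (NormedSpace.exp ((s:ℂ) • M)).mulVec f i)
        = b ⬝ᵥ (NormedSpace.exp ((s:ℂ) • M)).mulVec f := rfl
    rw [hdot, stmt18_exp_full d M μ hN, Matrix.smul_mulVec, dotProduct_smul,
      smul_eq_mul, stmt18_sum_mulVec, stmt18_dot_sum]
    rw [hQdef, Polynomial.eval_finset_sum, Finset.mul_sum, Finset.mul_sum]
    refine Finset.sum_congr rfl fun k _ => ?_
    rw [Matrix.smul_mulVec, dotProduct_smul, smul_eq_mul]
    simp only [Polynomial.eval_mul, Polynomial.eval_C, Polynomial.eval_pow, Polynomial.eval_X]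
    ring
  have hRe2 : ∀ s : ℝ, τ ≤ s →
      (Complex.exp (((s * μ.im : ℝ) : ℂ) * Complex.I) * Q.eval (s:ℂ)).re ≤ 0 := by
    intro s hs
    have h := hle s hs
    rw [hg s] at h
    have hsplit : (s:ℂ) * μ = ((s * μ.re : ℝ) : ℂ) + ((s * μ.im : ℝ) : ℂ) * Complex.I := by
      apply Complex.ext <;> simp
    rw [hsplit, Complex.exp_add, ← Complex.ofReal_exp, mul_assoc, Complex.re_ofReal_mul] at h
    nlinarith [Real.exp_pos (s * μ.re)]
  have hθ : ∀ θ : ℝ, (Complex.exp ((θ:ℂ) * Complex.I) * Q.leadingCoeff).re ≤ 0 := by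
    intro θ
    have hω0 : μ.im ≠ 0 := hμ
    have hTpos : (0:ℝ) < 2 * Real.pi / |μ.im| := by
      apply div_pos (by positivity) (abs_pos.mpr hω0)
    set sq : ℕ → ℝ := fun k => θ/μ.im + k * (2 * Real.pi / |μ.im|) with hsq
    have hs : Filter.Tendsto sq Filter.atTop Filter.atTop :=
      Filter.tendsto_atTop_add_const_left _ _
        (tendsto_natCast_atTop_atTop.atTop_mul_const hTpos)
    have hev : ∀ᶠ k in Filter.atTop,
        (Complex.exp ((θ:ℂ) * Complex.I)
          * (Q.eval ((sq k : ℝ):ℂ) / ((sq k : ℝ):ℂ) ^ Q.natDegree)).re ≤ 0 := by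
      filter_upwards [hs.eventually (Filter.eventually_ge_atTop τ),
        hs.eventually (Filter.eventually_ge_atTop 1)] with k hk1 hk2
      have h := hRe2 (sq k) hk1
      have hper := stmt18_per θ μ.im hω0 k
      rw [show ((θ/μ.im + (k:ℝ) * (2*Real.pi/|μ.im|)) * μ.im : ℝ) = (sq k * μ.im : ℝ) by
        rw [hsq]] at hper
      rw [hper] at h
      have hk0 : (0:ℝ) < sq k := lt_of_lt_of_le one_pos hk2
      have hposk : (0:ℝ) < (sq k) ^ Q.natDegree := pow_pos hk0 _
      have hdiv := div_nonpos_of_nonpos_of_nonneg h hposk.le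
      rw [← Complex.div_ofReal_re] at hdiv
      have : (Complex.exp ((θ:ℂ) * Complex.I) * Q.eval ((sq k : ℝ):ℂ))
            / (((sq k) ^ Q.natDegree : ℝ) : ℂ)
          = Complex.exp ((θ:ℂ) * Complex.I)
            * (Q.eval ((sq k : ℝ):ℂ) / ((sq k : ℝ):ℂ) ^ Q.natDegree) := by
        push_cast
        ring
      rw [this] at hdiv
      exact hdiv
    have hlim : Filter.Tendsto
        (fun k => (Complex.exp ((θ:ℂ) * Complex.I)
          * (Q.eval ((sq k : ℝ):ℂ) / ((sq k : ℝ):ℂ) ^ Q.natDegree)).re)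
        Filter.atTop (𝓝 ((Complex.exp ((θ:ℂ) * Complex.I) * Q.leadingCoeff).re)) := by
      have h1 := (stmt18_poly_tendsto Q).comp hs
      exact (Complex.continuous_re.tendsto _).comp (h1.const_mul _)
    exact le_of_tendsto hlim hev
  have hc : Q.leadingCoeff = 0 := by
    have e0 : Complex.exp (((0:ℝ):ℂ) * Complex.I) = 1 := by simp
    have epi : Complex.exp (((Real.pi:ℝ):ℂ) * Complex.I) = -1 := Complex.exp_pi_mul_I
    have ep2 : Complex.exp (((Real.pi/2 : ℝ):ℂ) * Complex.I) = Complex.I := by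
      rw [Complex.exp_mul_I, show (((Real.pi/2:ℝ)):ℂ) = (Real.pi:ℂ)/2 by push_cast; ring,
        Complex.cos_pi_div_two, Complex.sin_pi_div_two, one_mul, zero_add]
    have ep2' : Complex.exp (((-(Real.pi/2) : ℝ):ℂ) * Complex.I) = -Complex.I := by
      rw [show (((-(Real.pi/2):ℝ)):ℂ) = -((Real.pi:ℂ)/2) by push_cast; ring,
        Complex.exp_mul_I, Complex.cos_neg, Complex.sin_neg,
        Complex.cos_pi_div_two, Complex.sin_pi_div_two, neg_one_mul, zero_add]
    have h0 := hθ 0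
    have hpi := hθ Real.pi
    have hp2 := hθ (Real.pi/2)
    have hp2' := hθ (-(Real.pi/2))
    rw [e0, one_mul] at h0
    rw [epi] at hpi
    rw [ep2] at hp2
    rw [ep2'] at hp2'
    simp only [Complex.mul_re, Complex.neg_re, Complex.neg_im, Complex.one_re, Complex.one_im,
      Complex.I_re, Complex.I_im, neg_mul, one_mul, zero_mul, zero_sub, sub_zero, neg_zero,
      neg_neg] at hpi hp2 hp2'
    apply Complex.ext <;> simp <;> linarith
  have hQ0 : Q = 0 := Polynomial.leadingCoeff_eq_zero.mp hc
  intro t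
  rw [hg t, hQ0]
  simp
end
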